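/- The deterministic safety automaton D_{V,π} over alphabet V, with states S^⊥_{η,d} (bounded adaptive multi-counters plus a bottom element ⊥), transitions sending state σ on letter v to the greatest τ such that (σ,τ) is progressive with respect to π(v), and unsafe state ⊥, rejects every infinite word of vertices in which the highest priority occurring infinitely often is odd. -/

import Mathlib

/-- The strict order on finite binary strings:
`0s < ε`, `ε < 1s`, `bs < bs' iff s < s'`, and `0s < 1s'`. -/
def bslt : List Bool → List Bool → Prop
  | [], [] => False
  | b :: _, [] => b = false
  | [], b :: _ => b = true
  | a :: s, b :: t => (a = false ∧ b = true) ∨ (a = b ∧ bslt s t)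

/-- Strict order on `S^⊥`: multi-counters (tuples of binary strings, compared
lexicographically, a proper prefix being smaller) together with a bottom element
`⊥ = none`. -/
def olex : Option (List (List Bool)) → Option (List (List Bool)) → Prop
  | none, none => False
  | none, some _ => True
  | some _, none => False
  | some s, some t => List.Lex bslt s t

/-- Non-strict version of `olex`. -/
def ole (σ τ : Option (List (List Bool))) : Prop := σ = τ ∨ olex σ τ

/-- The `p`-truncation (components for odd priorities `≥ p`), with `⊥|_p = ⊥`. -/
def struncO (d p : ℕ) : Option (List (List Bool)) → Option (List (List Bool)) :=
  Option.map (fun t => t.take ((d + 1 - p) / 2))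

theorem bslt_irrefl : ∀ s : List Bool, ¬ bslt s s := by
  intro s
  induction s with
  | nil => simp [bslt]
  | cons a s ih => rintro (⟨h1, h2⟩ | ⟨-, h⟩); · simp [h1] at h2
                   · exact ih h

theorem bslt_trans : ∀ (a b c : List Bool), bslt a b → bslt b c → bslt a c := by
  intro a
  induction a with
  | nil =>
    rintro (_ | ⟨x, s⟩) (_ | ⟨y, t⟩) h1 h2 <;> simp_all [bslt]
  | cons v a ih =>
    rintro (_ | ⟨x, s⟩) (_ | ⟨y, t⟩) h1 h2 <;> simp_all [bslt]
    rcases h1 with ⟨h, h'⟩ | ⟨h, h'⟩ <;> rcases h2 with ⟨g, g'⟩ | ⟨g, g'⟩ <;>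
      subst_vars <;> simp_all
    exact ih _ _ h' g'

theorem lex_irrefl : ∀ s : List (List Bool), ¬ List.Lex bslt s s := by
  intro s
  induction s with
  | nil => intro h; cases h
  | cons a s ih =>
    intro h
    cases h with
    | rel h => exact bslt_irrefl _ h
    | cons h => exact ih h

theorem lex_trans : ∀ {s t u : List (List Bool)},
    List.Lex bslt s t → List.Lex bslt t u → List.Lex bslt s u := by
  intro s t u h1
  induction h1 generalizing u with
  | nil =>
    intro h2
    cases h2 with
    | rel _ => exact List.Lex.nil
    | cons _ => exact List.Lex.nil
  | @rel a l1 b l2 hab =>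
    intro h2
    cases h2 with
    | rel hbc => exact List.Lex.rel (bslt_trans _ _ _ hab hbc)
    | cons _ => exact List.Lex.rel hab
  | @cons a l1 l2 h ih =>
    intro h2
    cases h2 with
    | rel hbc => exact List.Lex.rel hbc
    | cons h' => exact List.Lex.cons (ih h')

theorem lex_take (m : ℕ) : ∀ {s t : List (List Bool)}, List.Lex bslt s t →
    List.Lex bslt (s.take m) (t.take m) ∨ s.take m = t.take m := by
  intro s t h
  induction h generalizing m with
  | nil =>
    cases m with
    | zero => exact Or.inr rfl
    | succ m => exact Or.inl List.Lex.nil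
  | rel h =>
    cases m with
    | zero => exact Or.inr rfl
    | succ m => exact Or.inl (List.Lex.rel h)
  | cons h ih =>
    cases m with
    | zero => exact Or.inr rfl
    | succ m =>
      rcases ih (m := m) with h' | h'
      · exact Or.inl (List.Lex.cons h')
      · exact Or.inr (by simp [h'])

theorem finite_bounded (M : ℕ) :
    ∀ L : ℕ, {t : List (List Bool) | t.length ≤ L ∧ ∀ s ∈ t, s.length ≤ M}.Finite := by
  intro L
  induction L with
  | zero =>
    apply Set.Finite.subset (Set.finite_singleton ([] : List (List Bool)))
    rintro t ⟨h1, -⟩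
    simp_all [List.length_eq_zero_iff]
  | succ L ih =>
    have hB : {s : List Bool | s.length ≤ M}.Finite := List.finite_length_le _ _
    apply Set.Finite.subset (((Set.finite_singleton ([] : List (List Bool))).union
      ((hB.prod ih).image (fun p => p.1 :: p.2))))
    rintro (_ | ⟨a, t⟩) ⟨h1, h2⟩
    · exact Or.inl rfl
    · refine Or.inr ⟨(a, t), ⟨h2 a (by simp), ?_, fun s hs => h2 s (by simp [hs])⟩, rfl⟩
      simpa using Nat.lt_succ_iff.mp (Nat.lt_of_lt_of_le (by simp) h1)

theorem olex_irrefl : ∀ a, ¬ olex a a := by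
  rintro (_ | a)
  · simp [olex]
  · exact lex_irrefl a

theorem olex_trans : ∀ {a b c : Option (List (List Bool))}, olex a b → olex b c → olex a c := by
  rintro (_ | a) (_ | b) (_ | c) h1 h2 <;> simp_all [olex]
  exact lex_trans h1 h2

theorem olex_ole {a b c : Option (List (List Bool))} (h1 : olex a b) (h2 : ole b c) :
    olex a c := by
  rcases h2 with rfl | h2
  · exact h1
  · exact olex_trans h1 h2

theorem ole_trans {a b c : Option (List (List Bool))} (h1 : ole a b) (h2 : ole b c) :
    ole a c := by
  rcases h1 with rfl | h1
  · exact h2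
  · exact Or.inr (olex_ole h1 h2)

theorem ole_strunc_mono {d p q : ℕ} (hqp : q ≤ p) {σ τ : Option (List (List Bool))}
    (h : ole (struncO d q τ) (struncO d q σ)) : ole (struncO d p τ) (struncO d p σ) := by
  have hk : (d + 1 - p) / 2 ≤ (d + 1 - q) / 2 :=
    Nat.div_le_div_right (Nat.sub_le_sub_left hqp _)
  cases τ with
  | none =>
    cases σ with
    | none => exact Or.inl rfl
    | some s => exact Or.inr trivial
  | some t =>
    cases σ with
    | none =>
      rcases h with h | h
      · exact absurd h (by simp [struncO])
      · exact absurd h (by simp [struncO, olex])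
    | some s =>
      rcases h with h | h
      · left
        simp only [struncO, Option.map_some, Option.some.injEq] at h ⊢
        calc t.take ((d+1-p)/2) = (t.take ((d+1-q)/2)).take ((d+1-p)/2) := by
              rw [List.take_take, Nat.min_eq_left hk]
          _ = (s.take ((d+1-q)/2)).take ((d+1-p)/2) := by rw [h]
          _ = s.take ((d+1-p)/2) := by rw [List.take_take, Nat.min_eq_left hk]
      · simp only [struncO, Option.map_some] at h ⊢
        change List.Lex bslt _ _ at h
        rcases lex_take ((d+1-p)/2) h with h' | h'
        · right
          show List.Lex bslt _ _
          rwa [List.take_take, Nat.min_eq_left hk, List.take_take, Nat.min_eq_left hk] at h'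
        · left
          rw [List.take_take, Nat.min_eq_left hk, List.take_take, Nat.min_eq_left hk] at h'
          rw [h']

/-- `(σ, τ)` is progressive w.r.t. priority `p` iff `σ|_p ≥ τ|_p` and, when `p` is
odd, either the inequality is strict or `σ = τ = ⊥`. -/
def ProgPair (d : ℕ) (σ τ : Option (List (List Bool))) (p : ℕ) : Prop :=
  ole (struncO d p τ) (struncO d p σ) ∧
  (Odd p → olex (struncO d p τ) (struncO d p σ) ∨ (σ = none ∧ τ = none))

/-- The state set `S^⊥_{η,d}`: `⊥` together with the `⌈lg η⌉`-bounded adaptive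
`i`-counters for `0 ≤ i ≤ d/2`. -/
def States (η d : ℕ) : Set (Option (List (List Bool))) :=
  {x | ∀ t, x = some t → t.length ≤ d / 2 ∧ (t.map List.length).sum ≤ Nat.clog 2 η}

/-- The initial state: the maximum multi-counter `(1⋯1, ε, …, ε)`. -/
def initState (η d : ℕ) : Option (List (List Bool)) :=
  some (List.replicate (Nat.clog 2 η) true :: List.replicate (d / 2 - 1) ([] : List Bool))

/-- The deterministic safety automaton `D_{V,π}` — with states `S^⊥_{η,d}`, initial
state the maximum multi-counter, transition sending state `σ` on letter `v` to the
greatest `τ` such that `(σ, τ)` is progressive w.r.t. `π(v)`, and unsafe state `⊥` —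
rejects every infinite word of vertices in which the highest priority occurring
infinitely often is odd: its run visits `⊥`. -/
theorem automaton_rejects_limsup_odd {V : Type*} [Fintype V] (d η : ℕ)
    (π : V → ℕ) (hπ : ∀ v, 1 ≤ π v ∧ π v ≤ d)
    (hη : η = Nat.card {v : V // Odd (π v)})
    (tr : Option (List (List Bool)) → V → Option (List (List Bool)))
    (htr : ∀ σ v, (tr σ v ∈ States η d ∧ ProgPair d σ (tr σ v) (π v)) ∧
      ∀ τ ∈ States η d, ProgPair d σ τ (π v) → ole τ (tr σ v))
    (w : ℕ → V)
    (hodd : ∃ p, Odd p ∧ (∃ N, ∀ n ≥ N, π (w n) ≤ p) ∧ (∀ N, ∃ n ≥ N, π (w n) = p))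
    (ρ : ℕ → Option (List (List Bool)))
    (hρ0 : ρ 0 = initState η d) (hρ : ∀ n, ρ (n + 1) = tr (ρ n) (w n)) :
    ∃ n, ρ n = none := by
  by_contra hcon
  push_neg at hcon
  obtain ⟨p, hpodd, ⟨N, hbound⟩, hinf⟩ := hodd
  set N1 := N + 1 with hN1
  set g : ℕ → Option (List (List Bool)) := fun n => struncO d p (ρ n) with hg
  have hP : ∀ n, ProgPair d (ρ n) (ρ (n + 1)) (π (w n)) := by
    intro n; rw [hρ n]; exact ((htr (ρ n) (w n)).1).2
  have step_ole : ∀ n ≥ N, ole (g (n + 1)) (g n) := by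
    intro n hn
    exact ole_strunc_mono (hbound n hn) (hP n).1
  have step_strict : ∀ n, π (w n) = p → olex (g (n + 1)) (g n) := by
    intro n hn
    have h := (hP n).2
    rw [hn] at h
    rcases h hpodd with h | ⟨h, -⟩
    · exact h
    · exact absurd h (hcon n)
  have chain : ∀ m n, N ≤ m → m ≤ n → ole (g n) (g m) := by
    intro m n hm hmn
    induction n, hmn using Nat.le_induction with
    | base => exact Or.inl rfl
    | succ n hmn ih => exact ole_trans (step_ole n (le_trans hm hmn)) ih
  have next : ∀ m, ∃ k, m < k ∧ olex (g (N1 + k)) (g (N1 + m)) := by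
    intro m
    obtain ⟨n, hn1, hn2⟩ := hinf (N1 + m)
    refine ⟨n + 1 - N1, by omega, ?_⟩
    have h1 : olex (g (n + 1)) (g n) := step_strict n hn2
    have h2 : ole (g n) (g (N1 + m)) := chain (N1 + m) n (by omega) hn1
    have he : N1 + (n + 1 - N1) = n + 1 := by omega
    rw [he]
    exact olex_ole h1 h2
  choose nxt hlt hstrict using next
  set seq : ℕ → ℕ := fun k => Nat.rec 0 (fun _ ih => nxt ih) k with hseq
  have seqsucc : ∀ j, seq (j + 1) = nxt (seq j) := fun _ => rfl
  have seqstrict : ∀ i j, i < j → olex (g (N1 + seq j)) (g (N1 + seq i)) := by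
    intro i j hij
    induction j with
    | zero => omega
    | succ j ih =>
      have h1 : olex (g (N1 + seq (j + 1))) (g (N1 + seq j)) := by
        rw [seqsucc]; exact hstrict (seq j)
      rcases Nat.lt_succ_iff_lt_or_eq.mp hij with h | h
      · exact olex_trans h1 (ih h)
      · rw [h]; exact h1
  set T : Set (List (List Bool)) :=
    {t | t.length ≤ d / 2 ∧ ∀ s ∈ t, s.length ≤ Nat.clog 2 η} with hTdef
  have hmem : ∀ n ≥ 1, ∃ t, g n = some t ∧ t ∈ T := by
    intro n hn
    obtain ⟨t, ht⟩ := Option.ne_none_iff_exists'.mp (hcon n)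
    have hst : ρ n ∈ States η d := by
      obtain ⟨m, rfl⟩ : ∃ m, n = m + 1 := ⟨n - 1, by omega⟩
      rw [hρ m]; exact ((htr (ρ m) (w m)).1).1
    obtain ⟨hl, hs⟩ := hst t ht
    refine ⟨t.take ((d + 1 - p) / 2), by simp [hg, struncO, ht], ?_, ?_⟩
    · rw [List.length_take]
      exact le_trans (min_le_right _ _) hl
    · intro s hs'
      have hst' : s ∈ t := List.take_subset _ _ hs'
      have : s.length ≤ (t.map List.length).sum :=
        List.single_le_sum (by simp) _ (List.mem_map_of_mem hst')
      omega
  choose F hF1 hF2 using fun k => hmem (N1 + seq k) (by omega)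
  have hT : T.Finite := finite_bounded _ _
  haveI := hT.to_subtype
  obtain ⟨i, j, hij, heq⟩ :=
    Finite.exists_ne_map_eq_of_infinite (fun k => (⟨F k, hF2 k⟩ : T))
  have hFeq : F i = F j := congrArg Subtype.val heq
  rcases Ne.lt_or_gt hij with h | h
  · have hs := seqstrict i j h
    rw [hF1 i, hF1 j, hFeq] at hs
    exact olex_irrefl _ hs
  · have hs := seqstrict j i h
    rw [hF1 i, hF1 j, hFeq] at hs
    exact olex_irrefl _ hs
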